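/- Let P, Q, R be continuous on [t₁, t₂) with P > 0, and let p, q, r be continuous with p > 0. Suppose y₀ is a C¹ solution of y' + y²/p + (q/p)y + r = 0 on [t₁, t₂) with y₀(t) ≥ 0 on [t₁, t₂), and suppose P(t) ≥ p(t), Q(t)/P(t) ≤ q(t)/p(t), and R(t) ≤ r(t) for all t ∈ [t₁, t₂). Then any solution y₂ of the Riccati equation y' + y²/P + (Q/P)y + R = 0 with y₂(t₁) ≥ y₀(t₁) exists on the whole interval [t₁, t₂) (i.e., does not blow up before t₂). -/

import Mathlib

open Set Filter Topology

/-- clamp is bounded -/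
private lemma clamp_abs_le {M : ℝ} (hM : 0 ≤ M) (y : ℝ) : |max (-M) (min y M)| ≤ M := by
  rw [abs_le]
  refine ⟨le_max_left _ _, max_le (by linarith) (min_le_right _ _)⟩

/-- clamp is 1-Lipschitz -/
private lemma clamp_lip (M u v : ℝ) :
    |max (-M) (min u M) - max (-M) (min v M)| ≤ |u - v| := by
  have h1 : |max (min u M) (-M) - max (min v M) (-M)| ≤ |min u M - min v M| :=
    abs_max_sub_max_le_abs _ _ _
  have h2 : |min u M - min v M| ≤ max |u - v| |M - M| := abs_min_sub_min_le_max u M v M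
  rw [max_comm (-M) (min u M), max_comm (-M) (min v M)]
  refine h1.trans (h2.trans ?_)
  simp [abs_nonneg]

private lemma clamp_eq {M y : ℝ} (h1 : -M ≤ y) (h2 : y ≤ M) :
    max (-M) (min y M) = y := by
  rw [min_eq_left h2, max_eq_right h1]

/-- Lipschitz estimate for the (truncated) Riccati field. -/
private lemma f0_lip {A B u v M pm cq : ℝ} (hpm : 0 < pm) (hA : pm ≤ A) (hB : |B| ≤ cq)
    (hu : |u| ≤ M) (hv : |v| ≤ M) (C : ℝ) :
    |(-(u ^ 2 / A + B * u + C)) - (-(v ^ 2 / A + B * v + C))| ≤ (2 * M / pm + cq) * |u - v| := by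
  have hA0 : 0 < A := lt_of_lt_of_le hpm hA
  have hM0 : 0 ≤ M := le_trans (abs_nonneg u) hu
  have heq : (-(u ^ 2 / A + B * u + C)) - (-(v ^ 2 / A + B * v + C))
      = -(((u + v) / A + B) * (u - v)) := by field_simp; ring
  rw [heq, abs_neg, abs_mul]
  refine mul_le_mul_of_nonneg_right ?_ (abs_nonneg _)
  calc |(u + v) / A + B| ≤ |(u + v) / A| + |B| := abs_add_le _ _
    _ ≤ 2 * M / pm + cq := by
        refine add_le_add ?_ hB
        rw [abs_div, abs_of_pos hA0]
        refine div_le_div₀ (by positivity) ?_ hpm hA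
        calc |u + v| ≤ |u| + |v| := abs_add_le _ _
          _ ≤ 2 * M := by linarith

/-- Bound for the (truncated) Riccati field. -/
private lemma f0_bound {A B C u M pm cq cr : ℝ} (hpm : 0 < pm) (hA : pm ≤ A)
    (hB : |B| ≤ cq) (hC : |C| ≤ cr) (hu : |u| ≤ M) :
    |(-(u ^ 2 / A + B * u + C))| ≤ M ^ 2 / pm + cq * M + cr := by
  have hA0 : 0 < A := lt_of_lt_of_le hpm hA
  have hM0 : 0 ≤ M := le_trans (abs_nonneg u) hu
  rw [abs_neg]
  have h1 : |u ^ 2 / A| ≤ M ^ 2 / pm := by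
    rw [abs_div, abs_of_pos hA0, abs_of_nonneg (sq_nonneg u)]
    refine div_le_div₀ (by positivity) ?_ hpm hA
    nlinarith [sq_abs u, abs_nonneg u]
  have h2 : |B * u| ≤ cq * M := by
    rw [abs_mul]
    exact mul_le_mul hB hu (abs_nonneg _) (le_trans (abs_nonneg _) hB)
  calc |u ^ 2 / A + B * u + C| ≤ |u ^ 2 / A + B * u| + |C| := abs_add_le _ _
    _ ≤ |u ^ 2 / A| + |B * u| + |C| := by linarith [abs_add_le (u ^ 2 / A) (B * u)]
    _ ≤ M ^ 2 / pm + cq * M + cr := by linarith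

/-- If `w(a) ≥ 0` and `w' ≥ -L|w|`, then `w ≥ 0` on `[a,b]`. -/
private lemma riccati_nonneg {w w' : ℝ → ℝ} {a b L : ℝ} (hL : 0 ≤ L)
    (hwc : ContinuousOn w (Set.Icc a b))
    (hw : ∀ t ∈ Set.Ico a b, HasDerivWithinAt w (w' t) (Set.Ici t) t)
    (h0 : 0 ≤ w a)
    (hineq : ∀ t ∈ Set.Ico a b, -(L * |w t|) ≤ w' t) :
    ∀ t ∈ Set.Icc a b, 0 ≤ w t := by
  by_contra hcon
  push_neg at hcon
  obtain ⟨σ, hσ, hwσ⟩ := hcon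
  have haσ : a ≤ σ := hσ.1
  have hσb : σ ≤ b := hσ.2
  have hSclosed : IsClosed (Set.Icc a σ ∩ w ⁻¹' Set.Ici 0) :=
    ContinuousOn.preimage_isClosed_of_isClosed
      (hwc.mono (Set.Icc_subset_Icc_right hσb)) isClosed_Icc isClosed_Ici
  have haS : a ∈ Set.Icc a σ ∩ w ⁻¹' Set.Ici 0 := ⟨⟨le_refl a, haσ⟩, h0⟩
  have hbdd : BddAbove (Set.Icc a σ ∩ w ⁻¹' Set.Ici 0) := ⟨σ, fun t htmem => htmem.1.2⟩
  set c := sSup (Set.Icc a σ ∩ w ⁻¹' Set.Ici 0) with hcdef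
  have hcS : c ∈ Set.Icc a σ ∩ w ⁻¹' Set.Ici 0 := hSclosed.csSup_mem ⟨a, haS⟩ hbdd
  have hac : a ≤ c := le_csSup hbdd haS
  have hcσ : c ≤ σ := hcS.1.2
  have hcb : c ≤ b := hcσ.trans hσb
  have hcltσ : c < σ := by
    rcases lt_or_eq_of_le hcσ with h | h
    · exact h
    · exact absurd (h ▸ hcS.2) (not_le.2 hwσ)
  have hneg : ∀ t ∈ Set.Ioc c σ, w t < 0 := by
    intro t htmem
    by_contra hge
    push_neg at hge
    exact absurd (le_csSup hbdd ⟨⟨hac.trans htmem.1.le, htmem.2⟩, hge⟩) (not_le.2 htmem.1)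
  have hwc0 : w c = 0 := by
    refine le_antisymm ?_ hcS.2
    have hmem : Set.Ioc c σ ∈ 𝓝[>] c := Ioc_mem_nhdsGT hcltσ
    have htend : Filter.Tendsto w (𝓝[>] c) (𝓝 (w c)) := by
      refine (hwc c ⟨hac, hcb⟩).mono_left (nhdsWithin_le_iff.2 ?_)
      exact Filter.mem_of_superset hmem (fun t htmem => ⟨hac.trans htmem.1.le, htmem.2.trans hσb⟩)
    refine le_of_tendsto htend ?_
    filter_upwards [hmem] with t htmem
    exact (hneg t htmem).le
  have hgron : ∀ x ∈ Set.Icc c σ, -(w x) ≤ gronwallBound 0 L 0 (x - c) := by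
    refine le_gronwallBound_of_liminf_deriv_right_le (f := fun t => -(w t))
      (f' := fun t => -(w' t)) ((hwc.mono (Set.Icc_subset_Icc hac hσb)).neg) ?_ (by simp [hwc0]) ?_
    · intro x hx rr hrr
      exact ((hw x ⟨hac.trans hx.1, lt_of_lt_of_le hx.2 hσb⟩).neg).liminf_right_slope_le hrr
    · intro x hx
      show -(w' x) ≤ L * -(w x) + 0
      have hwx : w x ≤ 0 := by
        rcases eq_or_lt_of_le hx.1 with h | h
        · rw [← h, hwc0]
        · exact (hneg x ⟨h, hx.2.le⟩).le
      have := hineq x ⟨hac.trans hx.1, lt_of_lt_of_le hx.2 hσb⟩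
      rw [abs_of_nonpos hwx] at this
      linarith
  have := hgron σ ⟨hcltσ.le, le_refl σ⟩
  rw [gronwallBound_ε0_δ0] at this
  linarith

/-- If the derivative is nonpositive whenever `z > T`, then `z ≤ max (z a) T` on `[a,b]`. -/
private lemma riccati_upper {z z' : ℝ → ℝ} {a b T : ℝ}
    (hzc : ContinuousOn z (Set.Icc a b))
    (hz : ∀ t ∈ Set.Ioo a b, HasDerivAt z (z' t) t)
    (hineq : ∀ t ∈ Set.Ioo a b, T < z t → z' t ≤ 0) :
    ∀ t ∈ Set.Icc a b, z t ≤ max (z a) T := by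
  by_contra hcon
  push_neg at hcon
  obtain ⟨σ, hσ, hσgt⟩ := hcon
  set B := max (z a) T with hBdef
  have haσ : a ≤ σ := hσ.1
  have hσb : σ ≤ b := hσ.2
  have hSclosed : IsClosed (Set.Icc a σ ∩ z ⁻¹' Set.Iic B) :=
    ContinuousOn.preimage_isClosed_of_isClosed
      (hzc.mono (Set.Icc_subset_Icc_right hσb)) isClosed_Icc isClosed_Iic
  have haS : a ∈ Set.Icc a σ ∩ z ⁻¹' Set.Iic B := ⟨⟨le_refl a, haσ⟩, by simp only [Set.mem_preimage, Set.mem_Iic, hBdef]; exact le_max_left _ _⟩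
  have hbdd : BddAbove (Set.Icc a σ ∩ z ⁻¹' Set.Iic B) := ⟨σ, fun t htmem => htmem.1.2⟩
  set c := sSup (Set.Icc a σ ∩ z ⁻¹' Set.Iic B) with hcdef
  have hcS : c ∈ Set.Icc a σ ∩ z ⁻¹' Set.Iic B := hSclosed.csSup_mem ⟨a, haS⟩ hbdd
  have hac : a ≤ c := le_csSup hbdd haS
  have hcσ : c ≤ σ := hcS.1.2
  have hcltσ : c < σ := by
    rcases lt_or_eq_of_le hcσ with h | h
    · exact h
    · exact absurd (h ▸ hcS.2) (not_le.2 hσgt)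
  have hgt : ∀ t ∈ Set.Ioc c σ, B < z t := by
    intro t htmem
    by_contra hge
    push_neg at hge
    exact absurd (le_csSup hbdd ⟨⟨hac.trans htmem.1.le, htmem.2⟩, hge⟩) (not_le.2 htmem.1)
  have hanti : AntitoneOn z (Set.Icc c σ) := by
    refine antitoneOn_of_deriv_nonpos (convex_Icc c σ)
      (hzc.mono (Set.Icc_subset_Icc hac hσb)) ?_ ?_
    · intro x hx
      rw [interior_Icc] at hx
      have hx' : x ∈ Set.Ioo a b := ⟨lt_of_le_of_lt hac hx.1, lt_of_lt_of_le hx.2 hσb⟩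
      exact ((hz x hx').differentiableAt).differentiableWithinAt
    · intro x hx
      rw [interior_Icc] at hx
      have hx' : x ∈ Set.Ioo a b := ⟨lt_of_le_of_lt hac hx.1, lt_of_lt_of_le hx.2 hσb⟩
      rw [(hz x hx').deriv]
      refine hineq x hx' (lt_of_le_of_lt (le_max_right (z a) T) (hgt x ⟨hx.1, hx.2.le⟩))
  have h1 : z σ ≤ z c := hanti ⟨le_refl c, hcσ⟩ ⟨hcσ, le_refl σ⟩ hcσ
  have h2 : B < z σ := hσgt
  have h3 : z c ≤ B := hcS.2
  linarith

set_option maxHeartbeats 1000000 in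
/-- Lemma 2.6: if `y₀ ≥ 0` solves `y' + y²/p + (q/p)y + r = 0` on `[t₁, t₂)` and
`P ≥ p`, `Q/P ≤ q/p`, `R ≤ r` there, then for every initial value `μ ≥ y₀(t₁)`
the Riccati equation `y' + y²/P + (Q/P)y + R = 0` has a solution on all of
`[t₁, t₂)` with `y(t₁) = μ`. -/
theorem stmt_9 (t₁ t₂ : ℝ) (ht : t₁ < t₂) (p q r P Q R y₀ y₀' : ℝ → ℝ)
    (hp : ContinuousOn p (Set.Ico t₁ t₂)) (hq : ContinuousOn q (Set.Ico t₁ t₂))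
    (hr : ContinuousOn r (Set.Ico t₁ t₂))
    (hP : ContinuousOn P (Set.Ico t₁ t₂)) (hQ : ContinuousOn Q (Set.Ico t₁ t₂))
    (hR : ContinuousOn R (Set.Ico t₁ t₂))
    (hppos : ∀ t ∈ Set.Ico t₁ t₂, 0 < p t)
    (hPpos : ∀ t ∈ Set.Ico t₁ t₂, 0 < P t)
    (hy₀ : ∀ t ∈ Set.Ico t₁ t₂, HasDerivAt y₀ (y₀' t) t)
    (hy₀'c : ContinuousOn y₀' (Set.Ico t₁ t₂))
    (hode₀ : ∀ t ∈ Set.Ico t₁ t₂,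
      y₀' t + (y₀ t) ^ 2 / p t + (q t / p t) * y₀ t + r t = 0)
    (hy₀nn : ∀ t ∈ Set.Ico t₁ t₂, 0 ≤ y₀ t)
    (hPp : ∀ t ∈ Set.Ico t₁ t₂, p t ≤ P t)
    (hQq : ∀ t ∈ Set.Ico t₁ t₂, Q t / P t ≤ q t / p t)
    (hRr : ∀ t ∈ Set.Ico t₁ t₂, R t ≤ r t) :
    ∀ μ : ℝ, y₀ t₁ ≤ μ →
      ∃ y₂ y₂' : ℝ → ℝ, y₂ t₁ = μ ∧
        (∀ t ∈ Set.Ico t₁ t₂, HasDerivAt y₂ (y₂' t) t) ∧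
        (∀ t ∈ Set.Ico t₁ t₂,
          y₂' t + (y₂ t) ^ 2 / P t + (Q t / P t) * y₂ t + R t = 0) := by
  intro μ hμ
  set f0 : ℝ → ℝ → ℝ := fun t y => -(y ^ 2 / P t + Q t / P t * y + R t) with hf0
  have hy₀c : ContinuousOn y₀ (Set.Ico t₁ t₂) := fun t htmem =>
    (hy₀ t htmem).continuousAt.continuousWithinAt
  have ht₁I : t₁ ∈ Set.Ico t₁ t₂ := ⟨le_refl t₁, ht⟩
  have hμ0 : 0 ≤ μ := le_trans (hy₀nn t₁ ht₁I) hμ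
  -- existence on compact subintervals
  have key : ∀ s ∈ Set.Ioo t₁ t₂, ∃ z : ℝ → ℝ, z t₁ = μ ∧
      ContinuousOn z (Set.Icc t₁ s) ∧
      (∀ t ∈ Set.Ico t₁ s, HasDerivWithinAt z (f0 t (z t)) (Set.Ici t) t) ∧
      (∀ t ∈ Set.Ioo t₁ s, HasDerivAt z (f0 t (z t)) t) := by
    intro s hs
    have hKsub : Set.Icc t₁ s ⊆ Set.Ico t₁ t₂ := fun t htmem =>
      ⟨htmem.1, lt_of_le_of_lt htmem.2 hs.2⟩
    have ht₁K : t₁ ∈ Set.Icc t₁ s := ⟨le_refl t₁, hs.1.le⟩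
    have hPne : ∀ t ∈ Set.Icc t₁ s, P t ≠ 0 := fun t htmem => (hPpos t (hKsub htmem)).ne'
    have hPK : ContinuousOn P (Set.Icc t₁ s) := hP.mono hKsub
    have hQPK : ContinuousOn (fun t => Q t / P t) (Set.Icc t₁ s) :=
      (hQ.mono hKsub).div hPK hPne
    have hRK : ContinuousOn R (Set.Icc t₁ s) := hR.mono hKsub
    obtain ⟨tm, htm, hmin⟩ := isCompact_Icc.exists_isMinOn ⟨t₁, ht₁K⟩ hPK
    have hpm : 0 < P tm := hPpos tm (hKsub htm)
    have hpmle : ∀ t ∈ Set.Icc t₁ s, P tm ≤ P t := fun t htmem => isMinOn_iff.mp hmin t htmem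
    obtain ⟨cq, hcq⟩ := isCompact_Icc.exists_bound_of_continuousOn hQPK
    obtain ⟨cr, hcr⟩ := isCompact_Icc.exists_bound_of_continuousOn hRK
    obtain ⟨b₀, hb₀⟩ := isCompact_Icc.exists_bound_of_continuousOn (hy₀c.mono hKsub)
    obtain ⟨pM, hpM⟩ := isCompact_Icc.exists_bound_of_continuousOn hPK
    simp only [Real.norm_eq_abs] at hcq hcr hb₀ hpM
    have hcq0 : 0 ≤ cq := le_trans (abs_nonneg _) (hcq t₁ ht₁K)
    have hcr0 : 0 ≤ cr := le_trans (abs_nonneg _) (hcr t₁ ht₁K)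
    have hb₀0 : 0 ≤ b₀ := le_trans (abs_nonneg _) (hb₀ t₁ ht₁K)
    have hpMle : ∀ t ∈ Set.Icc t₁ s, P t ≤ pM := fun t htmem =>
      (le_abs_self _).trans (hpM t htmem)
    have hpM0 : 0 < pM := lt_of_lt_of_le (hPpos t₁ ht₁I) (hpMle t₁ ht₁K)
    set T := max 1 (pM * (cq + cr)) with hTdef
    have hT1 : (1:ℝ) ≤ T := le_max_left _ _
    have hTpm : pM * (cq + cr) ≤ T := le_max_right _ _
    set B := max μ T with hBdef
    have hμB : μ ≤ B := le_max_left _ _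
    have hTB : T ≤ B := le_max_right _ _
    have hB0 : 0 ≤ B := hμ0.trans hμB
    set M := B + b₀ + 1 with hMdef
    have hM0 : 0 ≤ M := by positivity
    have hBM : B + 1 ≤ M := by simp only [hMdef]; linarith
    have hTM : T < M := by linarith
    have hb₀M : b₀ ≤ M := by simp only [hMdef]; linarith
    set cl : ℝ → ℝ := fun y => max (-M) (min y M) with hcl
    have hclabs : ∀ y, |cl y| ≤ M := fun y => clamp_abs_le hM0 y
    set L2 := 2 * M / P tm + cq with hL2def
    have hL20 : 0 ≤ L2 := by positivity
    set CM := M ^ 2 / P tm + cq * M + cr with hCMdef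
    have hCM0 : 0 ≤ CM := by positivity
    have hst₁ : (0:ℝ) ≤ s - t₁ := by linarith [hs.1.le]
    have hpl : IsPicardLindelof (fun t y => f0 t (cl y)) (⟨t₁, ht₁K⟩ : Set.Icc t₁ s) μ
        (CM * (s - t₁) + 1).toNNReal 0 CM.toNNReal L2.toNNReal := by
      constructor
      · intro t htK
        apply LipschitzOnWith.of_dist_le_mul
        intro x _ y _
        rw [Real.dist_eq, Real.dist_eq, Real.coe_toNNReal _ hL20]
        calc |f0 t (cl x) - f0 t (cl y)| ≤ L2 * |cl x - cl y| := by
              simp only [hf0]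
              exact f0_lip hpm (hpmle t htK) (hcq t htK) (hclabs x) (hclabs y) (R t)
          _ ≤ L2 * |x - y| := mul_le_mul_of_nonneg_left (clamp_lip M x y) hL20
      · intro x _
        simp only [hf0]
        exact (((continuousOn_const.div hPK hPne).add
          (hQPK.mul continuousOn_const)).add hRK).neg
      · intro t htK x _
        rw [Real.norm_eq_abs, Real.coe_toNNReal _ hCM0]
        simp only [hf0]
        exact f0_bound hpm (hpmle t htK) (hcq t htK) (hcr t htK) (hclabs x)
      · have := mul_nonneg hCM0 hst₁
        rw [Real.coe_toNNReal _ hCM0, Real.coe_toNNReal _ (by linarith), NNReal.coe_zero, sub_zero]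
        show CM * max (s - t₁) (t₁ - t₁) ≤ _
        rw [max_eq_left (by linarith : t₁ - t₁ ≤ s - t₁)]
        linarith
    obtain ⟨z, hz0, hzder⟩ := hpl.exists_eq_forall_mem_Icc_hasDerivWithinAt₀
    replace hz0 : z t₁ = μ := hz0
    have hzc : ContinuousOn z (Set.Icc t₁ s) := fun t htmem =>
      (hzder t htmem).continuousWithinAt
    have hzIci : ∀ t ∈ Set.Ico t₁ s, HasDerivWithinAt z (f0 t (cl (z t))) (Set.Ici t) t := by
      intro t htmem
      refine (hzder t ⟨htmem.1, htmem.2.le⟩).mono_of_mem_nhdsWithin ?_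
      have h1 : Set.Icc t s ∈ 𝓝[Set.Ici t] t := by
        rw [← Set.Ici_inter_Iic]
        exact Filter.inter_mem self_mem_nhdsWithin
          (mem_nhdsWithin_of_mem_nhds (Iic_mem_nhds htmem.2))
      exact Filter.mem_of_superset h1 (Set.Icc_subset_Icc_left htmem.1)
    have hzIoo : ∀ t ∈ Set.Ioo t₁ s, HasDerivAt z (f0 t (cl (z t))) t := fun t htmem =>
      (hzder t ⟨htmem.1.le, htmem.2.le⟩).hasDerivAt (Icc_mem_nhds htmem.1 htmem.2)
    -- upper bound
    have hineqU : ∀ t ∈ Set.Ioo t₁ s, T < z t → f0 t (cl (z t)) ≤ 0 := by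
      intro t htmem hTz
      have htK : t ∈ Set.Icc t₁ s := ⟨htmem.1.le, htmem.2.le⟩
      have hPt : 0 < P t := hPpos t (hKsub htK)
      have hu1 : cl (z t) = min (z t) M := by
        simp only [hcl]
        exact max_eq_right (le_min (by linarith) (by linarith))
      rw [hu1]
      set u := min (z t) M with hudef
      have hTu : T < u := lt_min hTz hTM
      have huM : u ≤ M := min_le_right _ _
      have hu0 : (0:ℝ) < u := by linarith
      have hu1' : (1:ℝ) ≤ u := by linarith
      simp only [hf0]
      have hq1 : -(cq * u) ≤ Q t / P t * u := by
        nlinarith [neg_abs_le (Q t / P t), hcq t htK, hu0.le]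
      have hr1 : -cr ≤ R t := by linarith [neg_abs_le (R t), hcr t htK]
      have hup : u ^ 2 / pM ≤ u ^ 2 / P t := by
        rw [div_le_div_iff₀ hpM0 hPt]
        nlinarith [sq_nonneg u, hpMle t htK]
      have hup2 : (cq + cr) * u ≤ u ^ 2 / pM := by
        rw [le_div_iff₀ hpM0]
        nlinarith
      have hcru : cr ≤ cr * u := le_mul_of_one_le_right hcr0 hu1'
      nlinarith
    have hub : ∀ t ∈ Set.Icc t₁ s, z t ≤ B := by
      intro t htK
      have h := riccati_upper (z' := fun τ => f0 τ (cl (z τ))) hzc hzIoo hineqU t htK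
      rw [hz0] at h
      exact le_trans h (le_of_eq hBdef.symm)
    -- lower bound
    have hlow : ∀ t ∈ Set.Icc t₁ s, 0 ≤ z t - y₀ t := by
      refine riccati_nonneg (w := fun τ => z τ - y₀ τ)
        (w' := fun τ => f0 τ (cl (z τ)) - y₀' τ) hL20
        (hzc.sub (hy₀c.mono hKsub)) ?_ ?_ ?_
      · intro t htmem
        exact (hzIci t htmem).sub
          ((hy₀ t ⟨htmem.1, lt_trans htmem.2 hs.2⟩).hasDerivWithinAt)
      · show 0 ≤ z t₁ - y₀ t₁
        rw [hz0]; linarith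
      · intro t htmem
        show -(L2 * |z t - y₀ t|) ≤ f0 t (cl (z t)) - y₀' t
        have htK : t ∈ Set.Icc t₁ s := ⟨htmem.1, htmem.2.le⟩
        have htI : t ∈ Set.Ico t₁ t₂ := hKsub htK
        have hy₀M : |y₀ t| ≤ M := (hb₀ t htK).trans hb₀M
        have hcly : cl (y₀ t) = y₀ t := by
          simp only [hcl]
          exact clamp_eq (abs_le.mp hy₀M).1 (abs_le.mp hy₀M).2
        have h1 : |f0 t (cl (z t)) - f0 t (y₀ t)| ≤ L2 * |z t - y₀ t| := by
          have hlipapp : |f0 t (cl (z t)) - f0 t (y₀ t)| ≤ L2 * |cl (z t) - y₀ t| := by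
            simp only [hf0]
            exact f0_lip hpm (hpmle t htK) (hcq t htK) (hclabs (z t)) hy₀M (R t)
          refine hlipapp.trans (mul_le_mul_of_nonneg_left ?_ hL20)
          calc |cl (z t) - y₀ t| = |cl (z t) - cl (y₀ t)| := by rw [hcly]
            _ ≤ |z t - y₀ t| := by simp only [hcl]; exact clamp_lip M (z t) (y₀ t)
        have he := hode₀ t htI
        have hpt : 0 < p t := hppos t htI
        have hPt : 0 < P t := hPpos t htI
        have hA : y₀ t ^ 2 / P t ≤ y₀ t ^ 2 / p t := by
          rw [div_le_div_iff₀ hPt hpt]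
          nlinarith [sq_nonneg (y₀ t), hPp t htI]
        have hB2 : Q t / P t * y₀ t ≤ q t / p t * y₀ t :=
          mul_le_mul_of_nonneg_right (hQq t htI) (hy₀nn t htI)
        have h2 : 0 ≤ f0 t (y₀ t) - y₀' t := by
          simp only [hf0]
          linarith [hRr t htI]
        have h3 : -(L2 * |z t - y₀ t|) ≤ f0 t (cl (z t)) - f0 t (y₀ t) := by
          linarith [neg_abs_le (f0 t (cl (z t)) - f0 t (y₀ t))]
        linarith
    have hclz : ∀ t ∈ Set.Icc t₁ s, cl (z t) = z t := by
      intro t htK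
      have h1 : 0 ≤ z t := by linarith [hlow t htK, hy₀nn t (hKsub htK)]
      have h2 : z t ≤ M := le_trans (hub t htK) (by linarith)
      simp only [hcl]
      exact clamp_eq (by linarith) h2
    refine ⟨z, hz0, hzc, ?_, ?_⟩
    · intro t htmem
      have h := hzIci t htmem
      rwa [hclz t ⟨htmem.1, htmem.2.le⟩] at h
    · intro t htmem
      have h := hzIoo t htmem
      rwa [hclz t ⟨htmem.1.le, htmem.2.le⟩] at h
  -- uniqueness on compact subintervals
  have huniq : ∀ s ∈ Set.Ioo t₁ t₂, ∀ z₁ z₂ : ℝ → ℝ,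
      ContinuousOn z₁ (Set.Icc t₁ s) → ContinuousOn z₂ (Set.Icc t₁ s) →
      (∀ t ∈ Set.Ico t₁ s, HasDerivWithinAt z₁ (f0 t (z₁ t)) (Set.Ici t) t) →
      (∀ t ∈ Set.Ico t₁ s, HasDerivWithinAt z₂ (f0 t (z₂ t)) (Set.Ici t) t) →
      z₁ t₁ = z₂ t₁ → Set.EqOn z₁ z₂ (Set.Icc t₁ s) := by
    intro s hs z₁ z₂ hc1 hc2 hd1 hd2 h12
    have hKsub : Set.Icc t₁ s ⊆ Set.Ico t₁ t₂ := fun t htmem =>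
      ⟨htmem.1, lt_of_le_of_lt htmem.2 hs.2⟩
    have ht₁K : t₁ ∈ Set.Icc t₁ s := ⟨le_refl t₁, hs.1.le⟩
    have hPne : ∀ t ∈ Set.Icc t₁ s, P t ≠ 0 := fun t htmem => (hPpos t (hKsub htmem)).ne'
    have hPK : ContinuousOn P (Set.Icc t₁ s) := hP.mono hKsub
    have hQPK : ContinuousOn (fun t => Q t / P t) (Set.Icc t₁ s) := (hQ.mono hKsub).div hPK hPne
    obtain ⟨tm, htm, hmin⟩ := isCompact_Icc.exists_isMinOn ⟨t₁, ht₁K⟩ hPK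
    have hpm : 0 < P tm := hPpos tm (hKsub htm)
    obtain ⟨cq, hcq⟩ := isCompact_Icc.exists_bound_of_continuousOn hQPK
    obtain ⟨N₁, hN₁⟩ := isCompact_Icc.exists_bound_of_continuousOn hc1
    obtain ⟨N₂, hN₂⟩ := isCompact_Icc.exists_bound_of_continuousOn hc2
    simp only [Real.norm_eq_abs] at hcq hN₁ hN₂
    set N := max N₁ N₂ with hNdef
    have hN0 : 0 ≤ N := le_trans (abs_nonneg _) ((hN₁ t₁ ht₁K).trans (le_max_left _ _))
    have hcq0 : 0 ≤ cq := le_trans (abs_nonneg _) (hcq t₁ ht₁K)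
    set L' := 2 * N / P tm + cq with hL'def
    have hL'0 : 0 ≤ L' := by positivity
    have hτm : ∀ t : ℝ, min (max t t₁) s ∈ Set.Icc t₁ s := fun t =>
      ⟨le_min (le_max_right _ _) hs.1.le, min_le_right _ _⟩
    have hv : ∀ t : ℝ, LipschitzOnWith L'.toNNReal
        (fun y => f0 (min (max t t₁) s) y) (Set.Icc (-N) N) := by
      intro t
      apply LipschitzOnWith.of_dist_le_mul
      intro x hx y hy
      rw [Real.dist_eq, Real.dist_eq, Real.coe_toNNReal _ hL'0]
      simp only [hf0]
      exact f0_lip hpm (isMinOn_iff.mp hmin _ (hτm t)) (hcq _ (hτm t))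
        (abs_le.mpr ⟨hx.1, hx.2⟩) (abs_le.mpr ⟨hy.1, hy.2⟩) (R _)
    have htt : ∀ t ∈ Set.Ico t₁ s, min (max t t₁) s = t := fun t htmem => by
      rw [max_eq_left htmem.1, min_eq_left htmem.2.le]
    refine ODE_solution_unique_of_mem_Icc_right (v := fun t y => f0 (min (max t t₁) s) y)
      (s := fun _ => Set.Icc (-N) N) (fun t _ => hv t) hc1 ?_ ?_ hc2 ?_ ?_ h12
    · intro t htmem
      show HasDerivWithinAt z₁ (f0 (min (max t t₁) s) (z₁ t)) (Set.Ici t) t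
      rw [htt t htmem]
      exact hd1 t htmem
    · intro t htmem
      exact Set.mem_Icc.mpr (abs_le.mp
        ((hN₁ t ⟨htmem.1, htmem.2.le⟩).trans (le_max_left _ _)))
    · intro t htmem
      show HasDerivWithinAt z₂ (f0 (min (max t t₁) s) (z₂ t)) (Set.Ici t) t
      rw [htt t htmem]
      exact hd2 t htmem
    · intro t htmem
      exact Set.mem_Icc.mpr (abs_le.mp
        ((hN₂ t ⟨htmem.1, htmem.2.le⟩).trans (le_max_right _ _)))
  -- gluing
  choose! Z hZ0 hZc hZIci hZIoo using key
  have hmid : ∀ t ∈ Set.Ico t₁ t₂, (t + t₂) / 2 ∈ Set.Ioo t₁ t₂ ∧ t < (t + t₂) / 2 :=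
    fun t htmem => ⟨⟨by linarith [htmem.1, htmem.2], by linarith [htmem.2]⟩,
      by linarith [htmem.2]⟩
  have hcons : ∀ s ∈ Set.Ioo t₁ t₂, ∀ s' ∈ Set.Ioo t₁ t₂, ∀ t ∈ Set.Icc t₁ (min s s'),
      Z s t = Z s' t := by
    intro s hs s' hs' t htmem
    have hmm : min s s' ∈ Set.Ioo t₁ t₂ :=
      ⟨lt_min hs.1 hs'.1, lt_of_le_of_lt (min_le_left _ _) hs.2⟩
    exact huniq (min s s') hmm (Z s) (Z s')
      ((hZc s hs).mono (Set.Icc_subset_Icc_right (min_le_left _ _)))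
      ((hZc s' hs').mono (Set.Icc_subset_Icc_right (min_le_right _ _)))
      (fun τ hτ => hZIci s hs τ ⟨hτ.1, lt_of_lt_of_le hτ.2 (min_le_left _ _)⟩)
      (fun τ hτ => hZIci s' hs' τ ⟨hτ.1, lt_of_lt_of_le hτ.2 (min_le_right _ _)⟩)
      ((hZ0 s hs).trans (hZ0 s' hs').symm) htmem
  set d := f0 t₁ μ with hddef
  set y₂ : ℝ → ℝ := fun t => if t < t₁ then μ + (t - t₁) * d else Z ((t + t₂) / 2) t
    with hy₂def
  have heqZ : ∀ s ∈ Set.Ioo t₁ t₂, ∀ t, t₁ ≤ t → t < s → y₂ t = Z s t := by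
    intro s hs t ht1 hts
    have htI : t ∈ Set.Ico t₁ t₂ := ⟨ht1, hts.trans hs.2⟩
    have hm := hmid t htI
    simp only [hy₂def, if_neg (not_lt.2 ht1)]
    exact hcons ((t + t₂) / 2) hm.1 s hs t ⟨ht1, le_min hm.2.le hts.le⟩
  have hy₂0 : y₂ t₁ = μ := by
    have hm := hmid t₁ ht₁I
    rw [heqZ ((t₁ + t₂) / 2) hm.1 t₁ le_rfl hm.2]
    exact hZ0 _ hm.1
  refine ⟨y₂, fun t => f0 t (y₂ t), hy₂0, ?_, ?_⟩
  · intro t htI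
    rcases eq_or_lt_of_le htI.1 with hteq | htlt
    · subst hteq
      have hm := hmid t₁ ht₁I
      have hIci : HasDerivWithinAt y₂ (f0 t₁ (y₂ t₁)) (Set.Ici t₁) t₁ := by
        have hz := hZIci ((t₁ + t₂) / 2) hm.1 t₁ ⟨le_rfl, hm.2⟩
        have hev : y₂ =ᶠ[𝓝[Set.Ici t₁] t₁] Z ((t₁ + t₂) / 2) := by
          have hmem : Set.Ico t₁ ((t₁ + t₂) / 2) ∈ 𝓝[Set.Ici t₁] t₁ := by
            rw [← Set.Ici_inter_Iio]
            exact Filter.inter_mem self_mem_nhdsWithin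
              (mem_nhdsWithin_of_mem_nhds (Iio_mem_nhds hm.2))
          exact Filter.eventuallyEq_of_mem hmem
            (fun τ hτ => heqZ ((t₁ + t₂) / 2) hm.1 τ hτ.1 hτ.2)
        have h := hz.congr_of_eventuallyEq hev (by rw [hy₂0, hZ0 _ hm.1])
        rwa [hZ0 _ hm.1, ← hy₂0] at h
      have hIic : HasDerivWithinAt y₂ (f0 t₁ (y₂ t₁)) (Set.Iic t₁) t₁ := by
        have hl : HasDerivAt (fun τ : ℝ => μ + (τ - t₁) * d) d t₁ := by
          simpa using (((hasDerivAt_id t₁).sub_const t₁).mul_const d).const_add μ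
        have hev : y₂ =ᶠ[𝓝[Set.Iic t₁] t₁] fun τ => μ + (τ - t₁) * d := by
          refine Filter.eventuallyEq_of_mem self_mem_nhdsWithin ?_
          intro τ hτ
          rcases lt_or_eq_of_le (Set.mem_Iic.mp hτ) with h | h
          · simp only [hy₂def, if_pos h]
          · rw [h, hy₂0]; simp
        have h := (hl.hasDerivWithinAt).congr_of_eventuallyEq hev (by rw [hy₂0]; simp)
        rwa [hddef, ← hy₂0] at h
      have hun := hIic.union hIci
      rw [Set.Iic_union_Ici] at hun
      exact hasDerivWithinAt_univ.mp hun
    · have hm := hmid t htI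
      have hev : y₂ =ᶠ[𝓝 t] Z ((t + t₂) / 2) := by
        refine Filter.eventuallyEq_of_mem (Ioo_mem_nhds htlt hm.2) ?_
        intro τ hτ
        exact heqZ ((t + t₂) / 2) hm.1 τ hτ.1.le hτ.2
      have hz := hZIoo ((t + t₂) / 2) hm.1 t ⟨htlt, hm.2⟩
      have h := hz.congr_of_eventuallyEq hev
      rwa [← heqZ ((t + t₂) / 2) hm.1 t htI.1 hm.2] at h
  · intro t htI
    show f0 t (y₂ t) + y₂ t ^ 2 / P t + Q t / P t * y₂ t + R t = 0
    simp only [hf0]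
    ring
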